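/- Let ψ ∈ ℝ. For r > 1, t > 0, ε > 0 define D_ε[ψ](r,t) = −(2ψ/(r√π)) ∫₀ᵗ e^{-s} ∫₀^{(r−1)√ε/(2√(t−s))} e^{-z²} dz ds. Then |D_ε[ψ](r,t)| ≤ C √(εt) |ψ| with C = 2/√π, for all r > 1, t > 0, ε > 0. -/

import Mathlib

open Real MeasureTheory

/-- The Duhamel term for constant boundary data in the exterior-ball problem. -/
noncomputable def De (ψ ε r t : ℝ) : ℝ :=
  -(2 * ψ / (r * Real.sqrt π)) *
    ∫ s in (0:ℝ)..t, Real.exp (-s) *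
      ∫ z in (0:ℝ)..((r - 1) * Real.sqrt ε / (2 * Real.sqrt (t - s))), Real.exp (-z ^ 2)

theorem stmt_9 (ψ : ℝ) :
    ∀ r t ε : ℝ, 1 < r → 0 < t → 0 < ε →
      |De ψ ε r t| ≤ (2 / Real.sqrt π) * Real.sqrt (ε * t) * |ψ| := by
  intro r t ε hr ht hε
  have hπ : (0:ℝ) < Real.sqrt π := Real.sqrt_pos.mpr Real.pi_pos
  have hr0 : (0:ℝ) < r := lt_trans one_pos hr
  have hr1 : (0:ℝ) ≤ r - 1 := by linarith
  set c : ℝ := (r - 1) * Real.sqrt ε / 2 with hc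
  have hc0 : 0 ≤ c := by positivity
  set g : ℝ → ℝ := fun s => c * (t - s) ^ (-(1/2) : ℝ) with hg
  -- g is interval integrable
  have hgint : IntervalIntegrable g volume 0 t := by
    have h1 : IntervalIntegrable (fun x : ℝ => x ^ (-(1/2) : ℝ)) volume 0 t :=
      intervalIntegral.intervalIntegrable_rpow' (by norm_num)
    have h2 := h1.comp_sub_left t
    simp only [sub_zero, sub_self] at h2
    simpa [hg] using (h2.symm).const_mul c
  -- pointwise bound
  have hpt : ∀ s ∈ Set.uIoc (0:ℝ) t,
      ‖Real.exp (-s) * ∫ z in (0:ℝ)..((r - 1) * Real.sqrt ε / (2 * Real.sqrt (t - s))),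
        Real.exp (-z ^ 2)‖ ≤ g s := by
    intro s hs
    rw [Set.uIoc_of_le ht.le] at hs
    obtain ⟨hs0, hst⟩ := hs
    have hts : 0 ≤ t - s := by linarith
    set L : ℝ := (r - 1) * Real.sqrt ε / (2 * Real.sqrt (t - s)) with hL
    have hL0 : 0 ≤ L := by positivity
    have hI0 : 0 ≤ ∫ z in (0:ℝ)..L, Real.exp (-z ^ 2) := by
      apply intervalIntegral.integral_nonneg hL0
      intro z _; positivity
    have hIL : (∫ z in (0:ℝ)..L, Real.exp (-z ^ 2)) ≤ L := by
      have h2 : (∫ z in (0:ℝ)..L, Real.exp (-z ^ 2)) ≤ ∫ z in (0:ℝ)..L, (1:ℝ) := by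
        apply intervalIntegral.integral_mono_on hL0
        · exact (Real.continuous_exp.comp (by continuity)).intervalIntegrable 0 L
        · exact intervalIntegrable_const
        · intro z _
          have hz : -z ^ 2 ≤ 0 := by nlinarith
          simpa using Real.exp_le_one_iff.mpr hz
      simpa using h2
    have hLg : L = g s := by
      have hrp : (t - s) ^ (-(1/2) : ℝ) = (Real.sqrt (t - s))⁻¹ := by
        rw [Real.rpow_neg hts, ← Real.sqrt_eq_rpow]
      rw [hL, hg]
      simp only [hrp]
      rw [div_eq_mul_inv, mul_inv]
      ring
    have hexp : Real.exp (-s) ≤ 1 := Real.exp_le_one_iff.mpr (by linarith)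
    have h1 : ‖Real.exp (-s) * ∫ z in (0:ℝ)..L, Real.exp (-z ^ 2)‖
        = Real.exp (-s) * ∫ z in (0:ℝ)..L, Real.exp (-z ^ 2) := by
      rw [Real.norm_eq_abs, abs_of_nonneg (by positivity)]
    rw [h1, ← hLg]
    calc Real.exp (-s) * ∫ z in (0:ℝ)..L, Real.exp (-z ^ 2)
        ≤ 1 * ∫ z in (0:ℝ)..L, Real.exp (-z ^ 2) :=
          mul_le_mul_of_nonneg_right hexp hI0
      _ = ∫ z in (0:ℝ)..L, Real.exp (-z ^ 2) := one_mul _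
      _ ≤ L := hIL
  -- value of the integral of g
  have hgval : (∫ s in (0:ℝ)..t, g s) = 2 * c * Real.sqrt t := by
    rw [hg]
    rw [intervalIntegral.integral_const_mul]
    have h1 : (∫ s in (0:ℝ)..t, (t - s) ^ (-(1/2) : ℝ)) =
        ∫ x in (0:ℝ)..t, x ^ (-(1/2) : ℝ) := by
      have h2 := intervalIntegral.integral_comp_sub_left
        (fun x : ℝ => x ^ (-(1/2) : ℝ)) t (a := 0) (b := t)
      simpa using h2
    rw [h1, integral_rpow (Or.inl (by norm_num)),
      show (-(1/2) : ℝ) + 1 = 1/2 by norm_num,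
      Real.zero_rpow (by norm_num : (1/2:ℝ) ≠ 0), ← Real.sqrt_eq_rpow]
    ring
  -- main bound on the Duhamel integral
  have key : |∫ s in (0:ℝ)..t, Real.exp (-s) *
      ∫ z in (0:ℝ)..((r - 1) * Real.sqrt ε / (2 * Real.sqrt (t - s))), Real.exp (-z ^ 2)|
      ≤ (r - 1) * Real.sqrt ε * Real.sqrt t := by
    have h3 := intervalIntegral.norm_integral_le_abs_of_norm_le
      (f := fun s => Real.exp (-s) *
        ∫ z in (0:ℝ)..((r - 1) * Real.sqrt ε / (2 * Real.sqrt (t - s))), Real.exp (-z ^ 2))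
      (g := g) (μ := volume) (a := 0) (b := t)
      ((ae_restrict_iff' measurableSet_uIoc).mpr (Filter.Eventually.of_forall hpt)) hgint
    rw [Real.norm_eq_abs] at h3
    refine h3.trans ?_
    rw [hgval, abs_of_nonneg (by positivity), hc]
    ring_nf
    exact le_refl _
  -- conclude
  have hsqrt : Real.sqrt (ε * t) = Real.sqrt ε * Real.sqrt t := Real.sqrt_mul hε.le t
  unfold De
  rw [abs_mul, abs_neg, abs_div, abs_of_pos (by positivity : 0 < r * Real.sqrt π),
    abs_mul, abs_of_pos (by norm_num : (0:ℝ) < 2)]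
  calc (2 * |ψ| / (r * Real.sqrt π)) * |∫ s in (0:ℝ)..t, Real.exp (-s) *
        ∫ z in (0:ℝ)..((r - 1) * Real.sqrt ε / (2 * Real.sqrt (t - s))), Real.exp (-z ^ 2)|
      ≤ (2 * |ψ| / (r * Real.sqrt π)) * ((r - 1) * Real.sqrt ε * Real.sqrt t) :=
        mul_le_mul_of_nonneg_left key (by positivity)
    _ = (2 / Real.sqrt π) * (Real.sqrt ε * Real.sqrt t) * |ψ| * ((r - 1) / r) := by
        field_simp
    _ ≤ (2 / Real.sqrt π) * (Real.sqrt ε * Real.sqrt t) * |ψ| * 1 := by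
        apply mul_le_mul_of_nonneg_left _ (by positivity)
        rw [div_le_one hr0]; linarith
    _ = (2 / Real.sqrt π) * Real.sqrt (ε * t) * |ψ| := by rw [hsqrt]; ring
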